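/- Let k be a natural number and let R be an ℕ^k-graded ring, i.e. a ring graded by the additive monoid Fin k → ℕ, with grading 𝒜 : (Fin k → ℕ) → AddSubgroup R. Let A be a right ideal of R whose right annihilator A^r = { t ∈ R | ∀ a ∈ A, a * t = 0 } is non-trivial. Then A^r contains a non-zero homogeneous element: there exist v ∈ Fin k → ℕ and a non-zero h ∈ 𝒜 v such that a * h = 0 for every a ∈ A. -/

import Mathlib

open DirectSum

noncomputable instance lexFinLinearOrder (k : ℕ) : LinearOrder (Lex (Fin k → ℕ)) :=
  @Pi.Lex.linearOrder (Fin k) (fun _ => ℕ) inferInstance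
    (inferInstanceAs (WellFoundedLT (Fin k))) (fun _ => inferInstance)

section AuxLemmas

variable {k : ℕ}

private lemma lex_add_lt_add_right' {x y : Fin k → ℕ} (c : Fin k → ℕ) (h : toLex x < toLex y) :
    toLex (x + c) < toLex (y + c) := by
  obtain ⟨i, hj, hi⟩ := h
  refine ⟨i, fun j hji => ?_, ?_⟩
  · show x j + c j = y j + c j
    have : x j = y j := hj j hji
    rw [this]
  · exact Nat.add_lt_add_right hi (c i)

private lemma lex_add_lt_add_left' {x y : Fin k → ℕ} (c : Fin k → ℕ) (h : toLex x < toLex y) :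
    toLex (c + x) < toLex (c + y) := by
  obtain ⟨i, hj, hi⟩ := h
  refine ⟨i, fun j hji => ?_, ?_⟩
  · show c j + x j = c j + y j
    have : x j = y j := hj j hji
    rw [this]
  · exact Nat.add_lt_add_left hi (c i)

private lemma lex_lt_combined' {w' v w m : Fin k → ℕ} (h1 : toLex w' < toLex w)
    (h2 : toLex v ≤ toLex m) : toLex (w' + v) < toLex (w + m) := by
  rcases h2.lt_or_eq with h2 | h2
  · exact (lex_add_lt_add_right' v h1).trans (lex_add_lt_add_left' w h2)
  · have : v = m := toLex.injective h2
    subst this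
    exact lex_add_lt_add_right' v h1

variable {R : Type*} [Ring R] (𝒜 : (Fin k → ℕ) → AddSubgroup R) [GradedRing 𝒜]

open scoped Classical

private lemma proj_mul_eq_zero_of_ne' {w : Fin k → ℕ} {x : R} (hx : x ∈ 𝒜 w) (t : R)
    (u : Fin k → ℕ) (hu : ∀ v ∈ (decompose 𝒜 t).support, w + v ≠ u) :
    (decompose 𝒜 (x * t) u : R) = 0 := by
  have h1 : x * t = ∑ v ∈ (decompose 𝒜 t).support, x * (decompose 𝒜 t v : R) := by
    rw [← Finset.mul_sum, sum_support_decompose]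
  rw [h1, decompose_sum, DFinsupp.finset_sum_apply, AddSubmonoidClass.coe_finset_sum]
  apply Finset.sum_eq_zero
  intro v hv
  exact decompose_of_mem_ne 𝒜 (SetLike.mul_mem_graded hx (SetLike.coe_mem _)) (hu v hv)

private lemma proj_top' (r t : R) {w m : Fin k → ℕ}
    (hw : w ∈ (decompose 𝒜 r).support)
    (hwmax : ∀ u ∈ (decompose 𝒜 r).support, toLex u ≤ toLex w)
    (hmmax : ∀ v ∈ (decompose 𝒜 t).support, toLex v ≤ toLex m) :
    (decompose 𝒜 (r * t) (w + m) : R) = (decompose 𝒜 r w : R) * (decompose 𝒜 t m : R) := by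
  have h1 : r * t = ∑ w' ∈ (decompose 𝒜 r).support, (decompose 𝒜 r w' : R) * t := by
    rw [← Finset.sum_mul, sum_support_decompose]
  rw [h1, decompose_sum, DFinsupp.finset_sum_apply, AddSubmonoidClass.coe_finset_sum]
  rw [Finset.sum_eq_single w]
  · exact coe_decompose_mul_add_of_left_mem 𝒜 (SetLike.coe_mem _)
  · intro w' hw' hne
    apply proj_mul_eq_zero_of_ne' 𝒜 (SetLike.coe_mem _) t
    intro v hv heq
    have h2 : toLex w' < toLex w :=
      lt_of_le_of_ne (hwmax w' hw') (fun hc => hne (toLex.injective hc))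
    have h3 := lex_lt_combined' h2 (hmmax v hv)
    rw [heq] at h3
    exact absurd h3 (lt_irrefl _)
  · intro h; exact absurd hw h

private lemma card_supp_mul_lt' {w m : Fin k → ℕ} {x t : R} (hx : x ∈ 𝒜 w)
    (hm : m ∈ (decompose 𝒜 t).support) (hxt : x * (decompose 𝒜 t m : R) = 0) :
    (decompose 𝒜 (x * t)).support.card < (decompose 𝒜 t).support.card := by
  have hsub : (decompose 𝒜 (x * t)).support ⊆
      ((decompose 𝒜 t).support.erase m).image (fun v => w + v) := by
    intro u hu
    have hu' : (decompose 𝒜 (x * t) u : R) ≠ 0 := by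
      intro hc
      exact DFinsupp.mem_support_iff.mp hu (Subtype.ext hc)
    have hex : ∃ v ∈ (decompose 𝒜 t).support, w + v = u := by
      by_contra hcon
      push_neg at hcon
      exact hu' (proj_mul_eq_zero_of_ne' 𝒜 hx t u hcon)
    obtain ⟨v, hv, hvu⟩ := hex
    have hvm : v ≠ m := by
      rintro rfl
      apply hu'
      rw [← hvu, coe_decompose_mul_add_of_left_mem 𝒜 hx]
      exact hxt
    exact Finset.mem_image.mpr ⟨v, Finset.mem_erase.mpr ⟨hvm, hv⟩, hvu⟩
  calc (decompose 𝒜 (x * t)).support.card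
      ≤ (((decompose 𝒜 t).support.erase m).image (fun v => w + v)).card :=
        Finset.card_le_card hsub
    _ ≤ ((decompose 𝒜 t).support.erase m).card := Finset.card_image_le
    _ < (decompose 𝒜 t).support.card := Finset.card_erase_lt_of_mem hm

private lemma supp_sub_proj' (r : R) {w : Fin k → ℕ} :
    (decompose 𝒜 (r - (decompose 𝒜 r w : R))).support ⊆ (decompose 𝒜 r).support.erase w := by
  intro u hu
  have hu' : (decompose 𝒜 (r - (decompose 𝒜 r w : R)) u : R) ≠ 0 := by
    intro hc; exact DFinsupp.mem_support_iff.mp hu (Subtype.ext hc)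
  have hc : (decompose 𝒜 (r - (decompose 𝒜 r w : R)) u : R)
      = (decompose 𝒜 r u : R) - (decompose 𝒜 ((decompose 𝒜 r w : R)) u : R) := by
    rw [decompose_sub]; rfl
  have huw : u ≠ w := by
    rintro rfl
    apply hu'
    rw [hc, decompose_of_mem_same 𝒜 (SetLike.coe_mem _), sub_self]
  refine Finset.mem_erase.mpr ⟨huw, DFinsupp.mem_support_iff.mpr ?_⟩
  intro h0
  apply hu'
  rw [hc, decompose_of_mem_ne 𝒜 (SetLike.coe_mem (decompose 𝒜 r w)) (Ne.symm huw), h0]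
  simp

end AuxLemmas

open scoped Classical

/-- Let `R` be an `ℕ^k`-graded ring (graded by the additive monoid `Fin k → ℕ`) and `A`
a right ideal of `R` whose right annihilator is non-trivial.  Then the right annihilator
of `A` contains a non-zero homogeneous element. -/
theorem exists_homogeneous_annihilator_of_nkGraded
    {k : ℕ} {R : Type*} [Ring R] (𝒜 : (Fin k → ℕ) → AddSubgroup R) [GradedRing 𝒜]
    (A : AddSubgroup R) (hA : ∀ a ∈ A, ∀ t : R, a * t ∈ A)
    (hann : ∃ t : R, t ≠ 0 ∧ ∀ a ∈ A, a * t = 0) :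
    ∃ (v : Fin k → ℕ) (h : R), h ∈ 𝒜 v ∧ h ≠ 0 ∧ ∀ a ∈ A, a * h = 0 := by
  classical
  obtain ⟨t₀, ht₀ne, ht₀ann⟩ := hann
  have hP : ∃ n : ℕ, ∃ t : R, t ≠ 0 ∧ (∀ a ∈ A, a * t = 0) ∧
      (decompose 𝒜 t).support.card = n := ⟨_, t₀, ht₀ne, ht₀ann, rfl⟩
  obtain ⟨t, htne, htann, htcard⟩ := Nat.find_spec hP
  have hmin : ∀ s : R, s ≠ 0 → (∀ a ∈ A, a * s = 0) →
      Nat.find hP ≤ (decompose 𝒜 s).support.card :=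
    fun s h1 h2 => Nat.find_min' hP ⟨s, h1, h2, rfl⟩
  have hsuppne : (decompose 𝒜 t).support.Nonempty := by
    rw [Finset.nonempty_iff_ne_empty]
    intro h
    apply htne
    rw [← sum_support_decompose 𝒜 t, h, Finset.sum_empty]
  obtain ⟨m, hmmem, hmmax⟩ := Finset.exists_max_image (α := Lex (Fin k → ℕ)) _ (fun v => toLex v) hsuppne
  have key : ∀ N : ℕ, ∀ r : R, (decompose 𝒜 r).support.card ≤ N → r * t = 0 →
      r * (decompose 𝒜 t m : R) = 0 := by
    intro N
    induction N with
    | zero =>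
      intro r hcard _
      have hse : (decompose 𝒜 r).support = ∅ := Finset.card_eq_zero.mp (Nat.le_zero.mp hcard)
      have hr : r = 0 := by rw [← sum_support_decompose 𝒜 r, hse, Finset.sum_empty]
      rw [hr, zero_mul]
    | succ N ih =>
      intro r hcard hrt
      by_cases hr0 : r = 0
      · rw [hr0, zero_mul]
      have hrsupp : (decompose 𝒜 r).support.Nonempty := by
        rw [Finset.nonempty_iff_ne_empty]
        intro h
        apply hr0
        rw [← sum_support_decompose 𝒜 r, h, Finset.sum_empty]
      obtain ⟨w, hwmem, hwmax⟩ := Finset.exists_max_image (α := Lex (Fin k → ℕ)) _ (fun v => toLex v) hrsupp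
      have hxmem : (decompose 𝒜 r w : R) ∈ 𝒜 w := SetLike.coe_mem _
      have hstep1 : (decompose 𝒜 r w : R) * (decompose 𝒜 t m : R) = 0 := by
        have h := proj_top' 𝒜 r t hwmem hwmax hmmax
        rw [hrt, decompose_zero] at h
        simpa using h.symm
      have hstep2 : (decompose 𝒜 r w : R) * t = 0 := by
        by_contra hne
        have hannxt : ∀ a ∈ A, a * ((decompose 𝒜 r w : R) * t) = 0 := fun a ha => by
          rw [← mul_assoc]; exact htann (a * (decompose 𝒜 r w : R)) (hA a ha _)
        have h1 := hmin _ hne hannxt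
        have h2 := card_supp_mul_lt' 𝒜 hxmem hmmem hstep1
        omega
      have hr't : (r - (decompose 𝒜 r w : R)) * t = 0 := by
        rw [sub_mul, hrt, hstep2, sub_zero]
      have hcard' : (decompose 𝒜 (r - (decompose 𝒜 r w : R))).support.card ≤ N := by
        have h1 := Finset.card_le_card (supp_sub_proj' 𝒜 r (w := w))
        have h2 := Finset.card_erase_of_mem hwmem
        have h3 : 1 ≤ (decompose 𝒜 r).support.card := Finset.card_pos.mpr hrsupp
        omega
      have hih := ih (r - (decompose 𝒜 r w : R)) hcard' hr't
      have : r * (decompose 𝒜 t m : R)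
          = (r - (decompose 𝒜 r w : R)) * (decompose 𝒜 t m : R)
            + (decompose 𝒜 r w : R) * (decompose 𝒜 t m : R) := by
        rw [sub_mul, sub_add_cancel]
      rw [this, hih, hstep1, add_zero]
  refine ⟨m, (decompose 𝒜 t m : R), SetLike.coe_mem _, ?_,
    fun a ha => key _ a le_rfl (htann a ha)⟩
  intro hc
  exact DFinsupp.mem_support_iff.mp hmmem (Subtype.ext hc)
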